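/- arXiv:1110.1580 — 3 statements merged into one kernel-verified Lean document; each statement's English description precedes it below -/
import Mathlib

section
/- Consider the allocation problem on a uniform 2-point metric with k servers available at all times, where at odd steps the cost vector (1,1,...,1,0) arrives at location 1 and at even steps the cost vector (1,0,...,0) arrives at location 2. Any integral solution over T time steps incurs total cost at least ⌊T/2⌋·min(1,1) = Ω(T): more precisely, during any two consecutive time steps, the solution pays at least 1 (hit or movement cost). -/
/-- Integral allocation on a uniform 2-point metric: `s t` is the number of servers
at location 1 at time `t` (location 2 has `k - s t`). At odd steps the cost vector
`(1,…,1,0)` arrives at location 1 (hit cost 1 unless all `k` servers are there);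
at even steps `(1,0,…,0)` arrives at location 2 (hit cost 1 unless at least one
server is there, i.e. `s t < k`). Movement cost is `|s t - s (t-1)|`.
Any two consecutive time steps incur total cost at least 1. -/
theorem stmt_6 (k : ℕ) (hk : 1 ≤ k) (s : ℕ → ℕ) (hs : ∀ t, s t ≤ k)
    (hit move : ℕ → ℝ)
    (hhit : ∀ t, hit t = if Odd t then (if s t = k then 0 else 1)
                         else (if s t < k then 0 else 1))
    (hmove : ∀ t, move t = |(s t : ℝ) - (s (t - 1) : ℝ)|) :
    ∀ t, 1 ≤ t → 1 ≤ (hit t + move t) + (hit (t + 1) + move (t + 1)) := by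
  intro t _
  have h1 := hhit t
  have h2 := hhit (t + 1)
  have h3 := hmove (t + 1)
  rw [Nat.add_sub_cancel] at h3
  have hm0 : 0 ≤ move t := by rw [hmove t]; exact abs_nonneg _
  have hm1 : 0 ≤ move (t + 1) := by rw [h3]; exact abs_nonneg _
  rcases Nat.even_or_odd t with he | ho
  · rw [if_neg (Nat.not_odd_iff_even.mpr he)] at h1
    rw [if_pos (Even.add_one he)] at h2
    by_cases hlt : s t < k
    · rw [if_pos hlt] at h1
      by_cases hk2 : s (t + 1) = k
      · rw [if_pos hk2] at h2
        have h4 : (s t : ℝ) + 1 ≤ k := by exact_mod_cast hlt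
        have : (1 : ℝ) ≤ move (t + 1) := by
          rw [h3, hk2, abs_of_nonneg (by linarith)]; linarith
        linarith
      · rw [if_neg hk2] at h2; linarith
    · rw [if_neg hlt] at h1
      have hh2 : 0 ≤ hit (t + 1) := by rw [h2]; split_ifs <;> norm_num
      linarith
  · rw [if_pos ho] at h1
    rw [if_neg (Nat.not_odd_iff_even.mpr (Odd.add_one ho))] at h2
    by_cases hk1 : s t = k
    · rw [if_pos hk1] at h1
      by_cases hlt : s (t + 1) < k
      · rw [if_pos hlt] at h2
        have h4 : (s (t + 1) : ℝ) + 1 ≤ k := by exact_mod_cast hlt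
        have : (1 : ℝ) ≤ move (t + 1) := by
          rw [h3, hk1, abs_of_nonpos (by linarith), neg_sub]; linarith
        linarith
      · rw [if_neg hlt] at h2; linarith
    · rw [if_neg hk1] at h1
      have hh2 : 0 ≤ hit (t + 1) := by rw [h2]; split_ifs <;> norm_num
      linarith
end

section
/- Let λ : {1,...,s} → ℝ≥0 and suppose two consecutive blocks B₁ = {j,...,j+s₁−1} and B₂ = {j+s₁,...,j+s₁+s₂−1} each satisfy the prefix-average property (for every prefix of the block, the average of λ over the prefix is at most the average over the whole block), and suppose avg_{B₁}(λ) ≤ avg_{B₂}(λ). Then the merged block B = B₁ ∪ B₂ also satisfies the prefix-average property: for every 1 ≤ r ≤ s₁+s₂, (1/r)·Σ_{j'=j}^{j+r−1} λ(j') ≤ (1/(s₁+s₂))·Σ_{j'∈B} λ(j'). -/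
/-- If consecutive blocks `B₁ = {j,…,j+s₁-1}` and `B₂ = {j+s₁,…,j+s₁+s₂-1}` each
satisfy the prefix-average property and `avg_{B₁} λ ≤ avg_{B₂} λ`, then the merged
block `B₁ ∪ B₂` also satisfies the prefix-average property. -/
theorem stmt_16 (lam : ℕ → ℝ) (hlam : ∀ i, 0 ≤ lam i)
    (j s₁ s₂ : ℕ) (hs₁ : 1 ≤ s₁) (hs₂ : 1 ≤ s₂)
    (hB₁ : ∀ r, 1 ≤ r → r ≤ s₁ →
      (∑ i ∈ Finset.range r, lam (j + i)) / r ≤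
        (∑ i ∈ Finset.range s₁, lam (j + i)) / s₁)
    (hB₂ : ∀ r, 1 ≤ r → r ≤ s₂ →
      (∑ i ∈ Finset.range r, lam (j + s₁ + i)) / r ≤
        (∑ i ∈ Finset.range s₂, lam (j + s₁ + i)) / s₂)
    (havg : (∑ i ∈ Finset.range s₁, lam (j + i)) / s₁ ≤
      (∑ i ∈ Finset.range s₂, lam (j + s₁ + i)) / s₂) :
    ∀ r, 1 ≤ r → r ≤ s₁ + s₂ →
      (∑ i ∈ Finset.range r, lam (j + i)) / r ≤
        (∑ i ∈ Finset.range (s₁ + s₂), lam (j + i)) / (s₁ + s₂) := by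
  intro r hr hrle
  set A := ∑ i ∈ Finset.range s₁, lam (j + i) with hAdef
  set B := ∑ i ∈ Finset.range s₂, lam (j + s₁ + i) with hBdef
  have hs₁' : (0:ℝ) < s₁ := by exact_mod_cast hs₁
  have hs₂' : (0:ℝ) < s₂ := by exact_mod_cast hs₂
  have hr' : (0:ℝ) < r := by exact_mod_cast hr
  have hA0 : 0 ≤ A := Finset.sum_nonneg fun i _ => hlam _
  have hB0 : 0 ≤ B := Finset.sum_nonneg fun i _ => hlam _
  have hAB : A * s₂ ≤ B * s₁ := by
    rw [div_le_div_iff₀ hs₁' hs₂'] at havg; linarith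
  have hsum : ∑ i ∈ Finset.range (s₁ + s₂), lam (j + i) = A + B := by
    rw [Finset.sum_range_add]
    congr 1
    exact Finset.sum_congr rfl fun i _ => by rw [add_assoc]
  rw [hsum]
  rcases le_or_gt r s₁ with h | h
  · have h1 := hB₁ r hr h
    have h2 : A / s₁ ≤ (A + B) / (s₁ + s₂) := by
      rw [div_le_div_iff₀ hs₁' (by positivity)]
      nlinarith
    exact h1.trans h2
  · obtain ⟨t, rfl⟩ : ∃ t, r = s₁ + t := ⟨r - s₁, by omega⟩
    have ht1 : 1 ≤ t := by omega
    have ht2 : t ≤ s₂ := by omega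
    have ht' : (0:ℝ) < t := by exact_mod_cast ht1
    have ht2' : (t:ℝ) ≤ s₂ := by exact_mod_cast ht2
    have hsplit : ∑ i ∈ Finset.range (s₁ + t), lam (j + i)
        = A + ∑ i ∈ Finset.range t, lam (j + s₁ + i) := by
      rw [Finset.sum_range_add]
      congr 1
      exact Finset.sum_congr rfl fun i _ => by rw [add_assoc]
    set C := ∑ i ∈ Finset.range t, lam (j + s₁ + i) with hCdef
    have hC0 : 0 ≤ C := Finset.sum_nonneg fun i _ => hlam _
    have hC : C * s₂ ≤ t * B := by
      have := hB₂ t ht1 ht2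
      rw [div_le_div_iff₀ ht' hs₂'] at this; linarith
    rw [hsplit]
    have hcast : ((s₁ + t : ℕ) : ℝ) = (s₁:ℝ) + t := by push_cast; ring
    rw [hcast, div_le_div_iff₀ (by positivity) (by positivity)]
    nlinarith [mul_nonneg (sub_nonneg.2 ht2') (sub_nonneg.2 hAB), mul_pos hs₁' hs₂']
end

section
/- Let v₁ ≤ v₂ ≤ ... ≤ v_m be a nondecreasing sequence of reals and let λ : {1,...,m} → ℝ≥0. Let P be a partition of {1,...,m} into consecutive blocks, and define λ_P(i) = avg_{j ∈ B} λ(j) where B is the block of P containing i. If P' is a coarsening of P obtained by merging consecutive blocks B₁, B₂ with avg_{B₁}(λ) ≤ avg_{B₂}(λ), then Σᵢ λ_P(i)·vᵢ ≥ Σᵢ λ_{P'}(i)·vᵢ. -/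
/-- Block-averaging against a nondecreasing vector: if `P` partitions `{0,…,m-1}`
into consecutive blocks (given by a monotone block-index map) and `P'` is obtained
from `P` by merging the consecutive blocks `b` and `b+1`, where the average of
`lam` over block `b` is at most that over block `b+1`, then the block-averaged
hit cost against a nondecreasing `v` only decreases. -/
theorem stmt_17 (m : ℕ) (v lam : ℕ → ℝ)
    (hv : ∀ i j, i ≤ j → j < m → v i ≤ v j)
    (hlam : ∀ i, i < m → 0 ≤ lam i)
    (P : ℕ → ℕ) (hPmono : ∀ i j, i ≤ j → P i ≤ P j)
    (b : ℕ)
    (hB1 : ((Finset.range m).filter (fun i => P i = b)).Nonempty)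
    (hB2 : ((Finset.range m).filter (fun i => P i = b + 1)).Nonempty)
    (havg : (∑ i ∈ (Finset.range m).filter (fun i => P i = b), lam i) /
        ((Finset.range m).filter (fun i => P i = b)).card ≤
      (∑ i ∈ (Finset.range m).filter (fun i => P i = b + 1), lam i) /
        ((Finset.range m).filter (fun i => P i = b + 1)).card)
    (P' : ℕ → ℕ) (hP' : ∀ i, P' i = if P i ≤ b then P i else P i - 1)
    (lamP lamP' : ℕ → ℝ)
    (hlamP : ∀ i, lamP i =
      (∑ j ∈ (Finset.range m).filter (fun j => P j = P i), lam j) /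
        ((Finset.range m).filter (fun j => P j = P i)).card)
    (hlamP' : ∀ i, lamP' i =
      (∑ j ∈ (Finset.range m).filter (fun j => P' j = P' i), lam j) /
        ((Finset.range m).filter (fun j => P' j = P' i)).card) :
    ∑ i ∈ Finset.range m, lamP' i * v i ≤ ∑ i ∈ Finset.range m, lamP i * v i := by
  classical
  set B1 := (Finset.range m).filter (fun i => P i = b) with hB1def
  set B2 := (Finset.range m).filter (fun i => P i = b + 1) with hB2def
  set S1 := ∑ i ∈ B1, lam i with hS1def
  set S2 := ∑ i ∈ B2, lam i with hS2def
  set n1 : ℝ := (B1.card : ℝ) with hn1def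
  set n2 : ℝ := (B2.card : ℝ) with hn2def
  have hn1 : 0 < n1 := by rw [hn1def]; exact_mod_cast Finset.card_pos.2 hB1
  have hn2 : 0 < n2 := by rw [hn2def]; exact_mod_cast Finset.card_pos.2 hB2
  have hn12 : 0 < n1 + n2 := by linarith
  have hP'iff : ∀ i j : ℕ, P' j = P' i ↔
      (P j = P i ∨ (P j = b ∧ P i = b + 1) ∨ (P j = b + 1 ∧ P i = b)) := by
    intro i j
    rw [hP' i, hP' j]
    split_ifs <;> omega
  have hdisj : Disjoint B1 B2 := by
    rw [Finset.disjoint_left]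
    intro a ha hb
    rw [hB1def, Finset.mem_filter] at ha
    rw [hB2def, Finset.mem_filter] at hb
    omega
  have hmerge : ∀ i : ℕ, (P i = b ∨ P i = b + 1) →
      (Finset.range m).filter (fun j => P' j = P' i) = B1 ∪ B2 := by
    intro i hi
    rw [hB1def, hB2def, ← Finset.filter_or]
    apply Finset.filter_congr
    intro j _
    rw [hP'iff]
    constructor <;> intro h <;> omega
  have hsame : ∀ i : ℕ, P i ≠ b → P i ≠ b + 1 →
      (Finset.range m).filter (fun j => P' j = P' i)
        = (Finset.range m).filter (fun j => P j = P i) := by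
    intro i hib hib1
    apply Finset.filter_congr
    intro j _
    rw [hP'iff]
    constructor <;> intro h <;> omega
  have hsum_union : ∑ j ∈ B1 ∪ B2, lam j = S1 + S2 := Finset.sum_union hdisj
  have hcard_union : ((B1 ∪ B2).card : ℝ) = n1 + n2 := by
    rw [Finset.card_union_of_disjoint hdisj]; push_cast; rfl
  have hlamP1 : ∀ i ∈ B1, lamP i = S1 / n1 := by
    intro i hi
    have hPi : P i = b := (Finset.mem_filter.mp hi).2
    rw [hlamP i]
    simp only [hPi]
    rfl
  have hlamP2 : ∀ i ∈ B2, lamP i = S2 / n2 := by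
    intro i hi
    have hPi : P i = b + 1 := (Finset.mem_filter.mp hi).2
    rw [hlamP i]
    simp only [hPi]
    rfl
  have hlamP'12 : ∀ i ∈ B1 ∪ B2, lamP' i = (S1 + S2) / (n1 + n2) := by
    intro i hi
    have hPi : P i = b ∨ P i = b + 1 := by
      rcases Finset.mem_union.mp hi with h | h
      · exact Or.inl (Finset.mem_filter.mp h).2
      · exact Or.inr (Finset.mem_filter.mp h).2
    rw [hlamP' i, hmerge i hPi, hsum_union, hcard_union]
  -- averages inequality
  have hkey : S1 * n2 ≤ S2 * n1 := by
    rw [div_le_div_iff₀ hn1 hn2] at havg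
    exact havg
  have hmu1 : S1 / n1 ≤ (S1 + S2) / (n1 + n2) := by
    rw [div_le_div_iff₀ hn1 hn12]
    nlinarith
  have hmu2 : (S1 + S2) / (n1 + n2) ≤ S2 / n2 := by
    rw [div_le_div_iff₀ hn12 hn2]
    nlinarith
  -- separating point
  set j0 := B2.min' hB2 with hj0def
  have hj0B2 : j0 ∈ B2 := Finset.min'_mem _ _
  have hj0m : j0 < m := Finset.mem_range.mp (Finset.mem_filter.mp hj0B2).1
  have hvle1 : ∀ i ∈ B1, v i ≤ v j0 := by
    intro i hi
    have hPi : P i = b := (Finset.mem_filter.mp hi).2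
    have hPj0 : P j0 = b + 1 := (Finset.mem_filter.mp hj0B2).2
    have hij : i ≤ j0 := by
      by_contra h
      have := hPmono j0 i (by omega)
      omega
    exact hv i j0 hij hj0m
  have hvle2 : ∀ j ∈ B2, v j0 ≤ v j := by
    intro j hj
    exact hv j0 j (Finset.min'_le _ _ hj) (Finset.mem_range.mp (Finset.mem_filter.mp hj).1)
  -- main computation
  rw [← sub_nonneg, ← Finset.sum_sub_distrib]
  have hsplit : ∑ i ∈ Finset.range m, (lamP i * v i - lamP' i * v i)
      = (∑ i ∈ B1, (lamP i * v i - lamP' i * v i))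
        + ∑ i ∈ B2, (lamP i * v i - lamP' i * v i) := by
    rw [← Finset.sum_union hdisj, hB1def, hB2def, ← Finset.filter_or]
    refine (Finset.sum_filter_of_ne ?_).symm
    intro x hx hne
    by_contra hc
    push_neg at hc
    have := hsame x hc.1 hc.2
    rw [hlamP x, hlamP' x, this] at hne
    simp at hne
  rw [hsplit]
  have h1 : ∀ i ∈ B1, (S1 / n1 - (S1 + S2) / (n1 + n2)) * v j0
      ≤ lamP i * v i - lamP' i * v i := by
    intro i hi
    rw [hlamP1 i hi, hlamP'12 i (Finset.mem_union_left _ hi), ← sub_mul]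
    exact mul_le_mul_of_nonpos_left (hvle1 i hi) (by linarith)
  have h2 : ∀ j ∈ B2, (S2 / n2 - (S1 + S2) / (n1 + n2)) * v j0
      ≤ lamP j * v j - lamP' j * v j := by
    intro j hj
    rw [hlamP2 j hj, hlamP'12 j (Finset.mem_union_right _ hj), ← sub_mul]
    exact mul_le_mul_of_nonneg_left (hvle2 j hj) (by linarith)
  have hb1 : n1 * ((S1 / n1 - (S1 + S2) / (n1 + n2)) * v j0)
      ≤ ∑ i ∈ B1, (lamP i * v i - lamP' i * v i) := by
    calc n1 * ((S1 / n1 - (S1 + S2) / (n1 + n2)) * v j0)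
        = ∑ _i ∈ B1, (S1 / n1 - (S1 + S2) / (n1 + n2)) * v j0 := by
          rw [Finset.sum_const, nsmul_eq_mul, hn1def]
      _ ≤ _ := Finset.sum_le_sum h1
  have hb2 : n2 * ((S2 / n2 - (S1 + S2) / (n1 + n2)) * v j0)
      ≤ ∑ j ∈ B2, (lamP j * v j - lamP' j * v j) := by
    calc n2 * ((S2 / n2 - (S1 + S2) / (n1 + n2)) * v j0)
        = ∑ _j ∈ B2, (S2 / n2 - (S1 + S2) / (n1 + n2)) * v j0 := by
          rw [Finset.sum_const, nsmul_eq_mul, hn2def]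
      _ ≤ _ := Finset.sum_le_sum h2
  have hzero : n1 * ((S1 / n1 - (S1 + S2) / (n1 + n2)) * v j0)
      + n2 * ((S2 / n2 - (S1 + S2) / (n1 + n2)) * v j0) = 0 := by
    have e1 : n1 * (S1 / n1) = S1 := by rw [mul_comm, div_mul_cancel₀ _ hn1.ne']
    have e2 : n2 * (S2 / n2) = S2 := by rw [mul_comm, div_mul_cancel₀ _ hn2.ne']
    have e3 : (n1 + n2) * ((S1 + S2) / (n1 + n2)) = S1 + S2 := by
      rw [mul_comm, div_mul_cancel₀ _ hn12.ne']
    linear_combination (v j0) * e1 + (v j0) * e2 - (v j0) * e3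
  linarith
end
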